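/- Let p(x_1,...,x_n) be a real polynomial and B = Π_{k=1}^n [a_k, b_k] a box. For an interval I = (a,b] define p|_I(u) = (u+1)^{deg p} · p((au+b)/(u+1)) variable by variable, giving p|_B. If there is a finite covering of B by boxes B_α such that for each α all coefficients of p|_{B_α} have the same sign, then p has no zero on B. -/

import Mathlib

open MvPolynomial

/-- The multivariate Möbius transform `p|_B` of a polynomial `p` with respect to
the box `B = ∏ₖ [aₖ, bₖ]`: substituting `xₖ = (aₖ uₖ + bₖ)/(uₖ + 1)` in each
variable and clearing denominators using the degree `Dₖ = degᵏ p`, i.e.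
`p|_B = ∑_m coeff m p · ∏ₖ (aₖ Xₖ + bₖ)^{mₖ} (Xₖ + 1)^{Dₖ - mₖ}`. -/
noncomputable def mobiusTransform {n : ℕ} (p : MvPolynomial (Fin n) ℝ)
    (a b : Fin n → ℝ) : MvPolynomial (Fin n) ℝ :=
  ∑ m ∈ p.support, MvPolynomial.C (p.coeff m) *
    ∏ k, (MvPolynomial.C (a k) * MvPolynomial.X k + MvPolynomial.C (b k)) ^ (m k)
      * (MvPolynomial.X k + 1) ^ (p.degreeOf k - m k)

/-- All coefficients (up to the degree bound `D` in each variable) of `q` have the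
same (strict) sign. -/
def allCoeffsSameSign {n : ℕ} (q : MvPolynomial (Fin n) ℝ) (D : Fin n → ℕ) : Prop :=
  (∀ m : Fin n →₀ ℕ, (∀ k, m k ≤ D k) → 0 < q.coeff m) ∨
  (∀ m : Fin n →₀ ℕ, (∀ k, m k ≤ D k) → q.coeff m < 0)

section Aux

variable {n : ℕ}

set_option maxHeartbeats 1000000 in
/-- Degree bound for the Möbius transform. -/
lemma mobius_degreeOf_le (p : MvPolynomial (Fin n) ℝ) (a b : Fin n → ℝ) (k : Fin n) :
    (mobiusTransform p a b).degreeOf k ≤ p.degreeOf k := by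
  classical
  rw [mobiusTransform]
  refine le_trans (degreeOf_sum_le _ _ _) (Finset.sup_le fun m hm => ?_)
  refine le_trans (degreeOf_mul_le _ _ _) ?_
  rw [degreeOf_C, zero_add]
  refine le_trans (degreeOf_prod_le _ _ _) ?_
  have key : ∀ k' : Fin n, degreeOf k ((C (a k') * X k' + C (b k')) ^ (m k')
      * (X k' + 1) ^ (p.degreeOf k' - m k')) ≤ if k = k' then p.degreeOf k' else 0 := by
    intro k'
    have h1 : degreeOf k (C (a k') * X k' + C (b k')) ≤ if k = k' then 1 else 0 := by
      refine le_trans (degreeOf_add_le _ _ _) ?_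
      rw [degreeOf_C, max_le_iff]
      refine ⟨le_trans (degreeOf_mul_le _ _ _) ?_, Nat.zero_le _⟩
      rw [degreeOf_C, zero_add, degreeOf_X]
    have h2 : degreeOf k (X k' + (1 : MvPolynomial (Fin n) ℝ)) ≤ if k = k' then 1 else 0 := by
      refine le_trans (degreeOf_add_le _ _ _) ?_
      rw [max_le_iff]
      refine ⟨le_of_eq (degreeOf_X _ _), ?_⟩
      rw [← C_1, degreeOf_C]
      exact Nat.zero_le _
    have hb1 : degreeOf k ((C (a k') * X k' + C (b k')) ^ (m k')) ≤
        m k' * (if k = k' then 1 else 0) :=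
      le_trans (degreeOf_pow_le _ _ _) (Nat.mul_le_mul_left _ h1)
    have hb2 : degreeOf k ((X k' + (1 : MvPolynomial (Fin n) ℝ)) ^ (p.degreeOf k' - m k')) ≤
        (p.degreeOf k' - m k') * (if k = k' then 1 else 0) :=
      le_trans (degreeOf_pow_le _ _ _) (Nat.mul_le_mul_left _ h2)
    refine le_trans (degreeOf_mul_le _ _ _) (le_trans (Nat.add_le_add hb1 hb2) ?_)
    have hmk : m k' ≤ p.degreeOf k' := monomial_le_degreeOf k' hm
    by_cases h : k = k' <;> simp [h] <;> omega
  refine le_trans (Finset.sum_le_sum fun k' _ => key k') ?_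
  simp

lemma mobius_support_le (p : MvPolynomial (Fin n) ℝ) (a b : Fin n → ℝ)
    {j : Fin n →₀ ℕ} (hj : j ∈ (mobiusTransform p a b).support) (k : Fin n) :
    j k ≤ p.degreeOf k :=
  le_trans (monomial_le_degreeOf k hj) (mobius_degreeOf_le p a b k)

lemma eval_mobius (p : MvPolynomial (Fin n) ℝ) (a b u : Fin n → ℝ) :
    eval u (mobiusTransform p a b) = ∑ m ∈ p.support, p.coeff m *
      ∏ k, (a k * u k + b k) ^ (m k) * (u k + 1) ^ (p.degreeOf k - m k) := by
  simp only [mobiusTransform, map_sum, map_mul, map_prod, map_pow, map_add, eval_C, eval_X,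
    map_one]

/-- The key identity, first for `s` with all coordinates nonzero. -/
lemma mobius_identity_ne (p : MvPolynomial (Fin n) ℝ) (a b t s : Fin n → ℝ)
    (hs : ∀ k, s k ≠ 0) :
    ∑ m ∈ p.support, p.coeff m *
        ∏ k, (a k * t k + b k * s k) ^ (m k) * (t k + s k) ^ (p.degreeOf k - m k)
      = ∑ j ∈ Finset.Iic (Finsupp.equivFunOnFinite.symm fun k => p.degreeOf k),
          (mobiusTransform p a b).coeff j *
            ∏ k, t k ^ (j k) * s k ^ (p.degreeOf k - j k) := by
  classical
  have h1 : ∑ m ∈ p.support, p.coeff m *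
        ∏ k, (a k * t k + b k * s k) ^ (m k) * (t k + s k) ^ (p.degreeOf k - m k)
      = (∏ k, s k ^ p.degreeOf k) * eval (fun k => t k / s k) (mobiusTransform p a b) := by
    rw [eval_mobius, Finset.mul_sum]
    refine Finset.sum_congr rfl fun m hm => ?_
    rw [mul_comm ((∏ k, s k ^ p.degreeOf k)) _, mul_assoc]
    congr 1
    rw [← Finset.prod_mul_distrib]
    refine Finset.prod_congr rfl fun k _ => ?_
    have hmk : m k ≤ p.degreeOf k := monomial_le_degreeOf k hm
    obtain ⟨e, he⟩ : ∃ e, p.degreeOf k = m k + e := ⟨p.degreeOf k - m k, by omega⟩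
    have he' : p.degreeOf k - m k = e := by omega
    have hA : a k * t k + b k * s k = s k * (a k * (t k / s k) + b k) := by
      linear_combination (-(a k * t k)) * mul_inv_cancel₀ (hs k)
    have hB : t k + s k = s k * (t k / s k + 1) := by
      linear_combination (-(t k)) * mul_inv_cancel₀ (hs k)
    rw [hA, hB, mul_pow, mul_pow, he', he, pow_add]
    ring
  have h2 : ∑ j ∈ Finset.Iic (Finsupp.equivFunOnFinite.symm fun k => p.degreeOf k),
          (mobiusTransform p a b).coeff j *
            ∏ k, t k ^ (j k) * s k ^ (p.degreeOf k - j k)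
      = (∏ k, s k ^ p.degreeOf k) * eval (fun k => t k / s k) (mobiusTransform p a b) := by
    rw [eval_eq', Finset.mul_sum]
    rw [← Finset.sum_subset
      (fun j hj => by
        rw [Finset.mem_Iic, Finsupp.le_def]
        intro k
        simpa using mobius_support_le p a b hj k)
      (fun j _ hj => by simp [notMem_support_iff.mp hj])]
    refine Finset.sum_congr rfl fun j hj => ?_
    rw [mul_comm ((∏ k, s k ^ p.degreeOf k)) _, mul_assoc]
    congr 1
    rw [← Finset.prod_mul_distrib]
    refine Finset.prod_congr rfl fun k _ => ?_
    have hjk : j k ≤ p.degreeOf k := mobius_support_le p a b hj k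
    obtain ⟨e, he⟩ : ∃ e, p.degreeOf k = j k + e := ⟨p.degreeOf k - j k, by omega⟩
    have he' : p.degreeOf k - j k = e := by omega
    have hst : s k * (t k / s k) = t k := by
      rw [mul_div_assoc']
      exact mul_div_cancel_left₀ _ (hs k)
    rw [he']
    symm
    calc (t k / s k) ^ (j k) * s k ^ degreeOf k p
        = (s k * (t k / s k)) ^ (j k) * s k ^ e := by rw [he, mul_pow, pow_add]; ring
      _ = t k ^ (j k) * s k ^ e := by rw [hst]
  rw [h1, h2]

/-- The key identity for nonnegative `s`, by continuity. -/
lemma mobius_identity (p : MvPolynomial (Fin n) ℝ) (a b t s : Fin n → ℝ)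
    (hs : ∀ k, 0 ≤ s k) :
    ∑ m ∈ p.support, p.coeff m *
        ∏ k, (a k * t k + b k * s k) ^ (m k) * (t k + s k) ^ (p.degreeOf k - m k)
      = ∑ j ∈ Finset.Iic (Finsupp.equivFunOnFinite.symm fun k => p.degreeOf k),
          (mobiusTransform p a b).coeff j *
            ∏ k, t k ^ (j k) * s k ^ (p.degreeOf k - j k) := by
  classical
  set F : (Fin n → ℝ) → ℝ := fun y => ∑ m ∈ p.support, p.coeff m *
        ∏ k, (a k * t k + b k * y k) ^ (m k) * (t k + y k) ^ (p.degreeOf k - m k) with hF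
  set G : (Fin n → ℝ) → ℝ := fun y => ∑ j ∈
      Finset.Iic (Finsupp.equivFunOnFinite.symm fun k => p.degreeOf k),
          (mobiusTransform p a b).coeff j *
            ∏ k, t k ^ (j k) * y k ^ (p.degreeOf k - j k) with hG
  have hFc : Continuous F := by
    apply continuous_finset_sum
    intro m _
    exact continuous_const.mul (continuous_finset_prod _ fun k _ =>
      ((continuous_const.add (continuous_const.mul (continuous_apply k))).pow _).mul
        ((continuous_const.add (continuous_apply k)).pow _))
  have hGc : Continuous G := by
    apply continuous_finset_sum
    intro j _
    exact continuous_const.mul (continuous_finset_prod _ fun k _ =>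
      continuous_const.mul ((continuous_apply k).pow _))
  have hseq : Filter.Tendsto (fun N : ℕ => fun k => s k + 1 / (N + 1 : ℝ))
      Filter.atTop (nhds s) := by
    rw [tendsto_pi_nhds]
    intro k
    simpa using tendsto_const_nhds.add (tendsto_one_div_add_atTop_nhds_zero_nat (𝕜 := ℝ))
  have heq : ∀ N : ℕ, F (fun k => s k + 1 / (N + 1 : ℝ)) = G (fun k => s k + 1 / (N + 1 : ℝ)) := by
    intro N
    refine mobius_identity_ne p a b t _ fun k => ?_
    have h0 : (0:ℝ) < 1 / (N + 1 : ℝ) := by positivity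
    exact ne_of_gt (add_pos_of_nonneg_of_pos (hs k) h0)
  have h1 := (hFc.tendsto s).comp hseq
  have h2 := (hGc.tendsto s).comp hseq
  have h3 : (F ∘ fun N : ℕ => fun k => s k + 1 / (N + 1 : ℝ))
      = (G ∘ fun N : ℕ => fun k => s k + 1 / (N + 1 : ℝ)) := funext heq
  rw [h3] at h1
  exact tendsto_nhds_unique h1 h2

/-- The box-wise criterion. -/
lemma key_lemma (p : MvPolynomial (Fin n) ℝ) (a b : Fin n → ℝ)
    (hab : ∀ k, a k ≤ b k)
    (hsign : allCoeffsSameSign (mobiusTransform p a b) (fun k => p.degreeOf k))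
    (x : Fin n → ℝ) (hx : ∀ k, x k ∈ Set.Icc (a k) (b k)) :
    eval x p ≠ 0 := by
  classical
  set t : Fin n → ℝ := fun k => if a k = b k then 0 else (b k - x k) / (b k - a k) with htdef
  set s : Fin n → ℝ := fun k => if a k = b k then 1 else (x k - a k) / (b k - a k) with hsdef
  have hxk1 : ∀ k, a k ≤ x k := fun k => (hx k).1
  have hxk2 : ∀ k, x k ≤ b k := fun k => (hx k).2
  have ht : ∀ k, 0 ≤ t k := by
    intro k
    by_cases h : a k = b k
    · simp [htdef, h]
    · have hlt : a k < b k := lt_of_le_of_ne (hab k) h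
      simp only [htdef, h, if_false]
      apply div_nonneg <;> linarith [hxk2 k]
  have hs : ∀ k, 0 ≤ s k := by
    intro k
    by_cases h : a k = b k
    · simp [hsdef, h]
    · have hlt : a k < b k := lt_of_le_of_ne (hab k) h
      simp only [hsdef, h, if_false]
      apply div_nonneg <;> linarith [hxk1 k]
  have hts : ∀ k, t k + s k = 1 := by
    intro k
    by_cases h : a k = b k
    · simp [htdef, hsdef, h]
    · have hlt : a k < b k := lt_of_le_of_ne (hab k) h
      simp only [htdef, hsdef, h, if_false]
      rw [← add_div]
      have hh : b k - x k + (x k - a k) = b k - a k := by ring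
      rw [hh, div_self (by linarith)]
  have hxts : ∀ k, a k * t k + b k * s k = x k := by
    intro k
    by_cases h : a k = b k
    · have h1 : x k = b k := le_antisymm (hxk2 k) (h ▸ hxk1 k)
      simp [htdef, hsdef, h, h1]
    · have hlt : a k < b k := lt_of_le_of_ne (hab k) h
      simp only [htdef, hsdef, h, if_false]
      rw [mul_div_assoc', mul_div_assoc', ← add_div]
      have hh : a k * (b k - x k) + b k * (x k - a k) = x k * (b k - a k) := by ring
      rw [hh, mul_div_assoc, div_self (by linarith), mul_one]
  -- eval x p equals the LHS of the identity
  have hev : eval x p = ∑ m ∈ p.support, p.coeff m *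
        ∏ k, (a k * t k + b k * s k) ^ (m k) * (t k + s k) ^ (p.degreeOf k - m k) := by
    rw [eval_eq']
    refine Finset.sum_congr rfl fun m _ => ?_
    congr 1
    refine Finset.prod_congr rfl fun k _ => ?_
    rw [hxts k, hts k, one_pow, mul_one]
  rw [hev, mobius_identity p a b t s hs]
  set J := Finset.Iic (Finsupp.equivFunOnFinite.symm fun k => p.degreeOf k) with hJdef
  have hJ : ∀ {j : Fin n →₀ ℕ}, j ∈ J → ∀ k, j k ≤ p.degreeOf k := by
    intro j hj k
    rw [hJdef, Finset.mem_Iic, Finsupp.le_def] at hj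
    simpa using hj k
  set w : (Fin n →₀ ℕ) → ℝ := fun j => ∏ k, t k ^ (j k) * s k ^ (p.degreeOf k - j k)
    with hwdef
  have hw_nonneg : ∀ j : Fin n →₀ ℕ, 0 ≤ w j := by
    intro j
    exact Finset.prod_nonneg fun k _ =>
      mul_nonneg (pow_nonneg (ht k) _) (pow_nonneg (hs k) _)
  set jstar : Fin n →₀ ℕ :=
    Finsupp.equivFunOnFinite.symm (fun k => if s k = 0 then p.degreeOf k else 0) with hjstardef
  have hjstar_apply : ∀ k, jstar k = if s k = 0 then p.degreeOf k else 0 := by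
    intro k; simp [hjstardef]
  have hjstarJ : jstar ∈ J := by
    rw [hJdef, Finset.mem_Iic, Finsupp.le_def]
    intro k
    rw [hjstar_apply]
    simp only [Finsupp.coe_equivFunOnFinite_symm]
    split <;> omega
  have hw_pos : 0 < w jstar := by
    refine Finset.prod_pos fun k _ => ?_
    by_cases h : s k = 0
    · have ht1 : t k = 1 := by have := hts k; rw [h] at this; linarith
      simp [hjstar_apply, h, ht1]
    · have hsk : 0 < s k := lt_of_le_of_ne (hs k) (Ne.symm h)
      rw [hjstar_apply k]
      simp only [h, if_false, pow_zero, one_mul, Nat.sub_zero]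
      positivity
  rcases hsign with hpos | hneg
  · have hlt : 0 < ∑ j ∈ J, (mobiusTransform p a b).coeff j * w j :=
      Finset.sum_pos' (fun j hj => mul_nonneg (le_of_lt (hpos j (hJ hj)))
        (hw_nonneg j)) ⟨jstar, hjstarJ, mul_pos (hpos jstar (hJ hjstarJ)) hw_pos⟩
    exact ne_of_gt hlt
  · have hlt : 0 < ∑ j ∈ J, -((mobiusTransform p a b).coeff j * w j) := by
      refine Finset.sum_pos' (fun j hj => ?_) ⟨jstar, hjstarJ, ?_⟩
      · have := hneg j (hJ hj)
        nlinarith [hw_nonneg j]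
      · have := hneg jstar (hJ hjstarJ)
        nlinarith [hw_pos]
    rw [Finset.sum_neg_distrib] at hlt
    have h4 : ∑ j ∈ J, (mobiusTransform p a b).coeff j * w j < 0 := by linarith
    exact ne_of_lt h4

end Aux

/-- Barros–Leandro criterion: if a box `B` admits a finite covering by boxes `B_α`
such that all Möbius coefficients of `p|_{B_α}` have the same sign for every `α`,
then `p` has no zero on `B`. -/
theorem stmt16 {n : ℕ} (p : MvPolynomial (Fin n) ℝ) (a b : Fin n → ℝ)
    {A : Type*} [Fintype A] (aα bα : A → Fin n → ℝ)
    (hle : ∀ (α : A) (k : Fin n), aα α k ≤ bα α k)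
    (hcover : (Set.univ.pi fun k => Set.Icc (a k) (b k)) ⊆
      ⋃ α : A, Set.univ.pi fun k => Set.Icc (aα α k) (bα α k))
    (hsign : ∀ α : A,
      allCoeffsSameSign (mobiusTransform p (aα α) (bα α)) (fun k => p.degreeOf k)) :
    ∀ x ∈ Set.univ.pi fun k => Set.Icc (a k) (b k), MvPolynomial.eval x p ≠ 0 := by
  intro x hx
  obtain ⟨_, ⟨α, rfl⟩, hxα⟩ := hcover hx
  exact key_lemma p (aα α) (bα α) (hle α) (hsign α) x fun k => hxα k (Set.mem_univ k)
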